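/- The finite partition {C_i}_{i∈I} is uniform (μ[C_i] = μ[C_j] for all i, j) if and only if the stochastic matrix W with entries W_{i,j} = μ[φ^{-1}(C_j) ∩ C_i]/μ[C_i] is doubly stochastic, assuming φ is mixing with respect to the finite invariant measure μ. -/

import Mathlib

open MeasureTheory Filter Set Topology

/-- The finite partition {C_i} is uniform (all cells of equal measure) if and only if
the stochastic matrix W_{i,j} = μ[φ^{-1}(C_j) ∩ C_i]/μ[C_i] is doubly stochastic,
for φ mixing with respect to the finite invariant measure μ. -/
theorem uniform_partition_iff_doubly_stochastic
    {X : Type*} [MeasurableSpace X] {I : Type*} [Fintype I]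
    (μ : Measure X) [IsFiniteMeasure μ]
    (φ : X → X) (hφ : MeasurePreserving φ μ μ)
    (hmix : ∀ A B : Set X, MeasurableSet A → MeasurableSet B →
      Tendsto (fun n => (μ (φ^[n] ⁻¹' A ∩ B)).toReal) atTop
        (𝓝 ((μ A).toReal / (μ Set.univ).toReal * (μ B).toReal)))
    (C : I → Set X) (hmeas : ∀ i, MeasurableSet (C i))
    (hdisj : Pairwise (Function.onFun Disjoint C)) (hcover : ⋃ i, C i = Set.univ)
    (hpos : ∀ i, 0 < μ (C i))
    (W : I → I → ℝ)
    (hW : ∀ i j, W i j = (μ (φ ⁻¹' (C j) ∩ C i)).toReal / (μ (C i)).toReal) :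
    (∀ i j, μ (C i) = μ (C j)) ↔
      ((∀ i j, 0 ≤ W i j) ∧ (∀ i, ∑ j, W i j = 1) ∧ (∀ j, ∑ i, W i j = 1)) := by
  classical
  have hfin : ∀ s : Set X, μ s ≠ ⊤ := fun s => measure_ne_top μ s
  set m : I → ℝ := fun i => (μ (C i)).toReal with hm
  have hmpos : ∀ i, 0 < m i := fun i => ENNReal.toReal_pos (hpos i).ne' (hfin _)
  have hmnum : ∀ i, MeasurableSet (φ ⁻¹' (C i)) := fun i => hφ.measurable (hmeas i)
  -- row sums of numerators
  have hrowsum : ∀ i, ∑ j, μ (φ ⁻¹' (C j) ∩ C i) = μ (C i) := by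
    intro i
    have hd : Pairwise (Function.onFun Disjoint fun j => φ ⁻¹' (C j) ∩ C i) := fun a b hab =>
      (((hdisj hab).preimage φ).mono inter_subset_left inter_subset_left)
    have hms : ∀ j, MeasurableSet (φ ⁻¹' (C j) ∩ C i) := fun j => (hmnum j).inter (hmeas i)
    have h1 := measure_iUnion (μ := μ) hd hms
    rw [tsum_fintype] at h1
    rw [← h1, ← iUnion_inter, ← preimage_iUnion, hcover, preimage_univ, univ_inter]
  -- column sums of numerators
  have hcolsum : ∀ j, ∑ i, μ (φ ⁻¹' (C j) ∩ C i) = μ (C j) := by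
    intro j
    have hd : Pairwise (Function.onFun Disjoint fun i => φ ⁻¹' (C j) ∩ C i) := fun a b hab =>
      ((hdisj hab).mono inter_subset_right inter_subset_right)
    have hms : ∀ i, MeasurableSet (φ ⁻¹' (C j) ∩ C i) := fun i => (hmnum j).inter (hmeas i)
    have h1 := measure_iUnion (μ := μ) hd hms
    rw [tsum_fintype] at h1
    rw [← h1, ← inter_iUnion, hcover, inter_univ,
      hφ.measure_preimage (hmeas j).nullMeasurableSet]
  have hnn : ∀ i j, 0 ≤ W i j := by
    intro i j; rw [hW]; positivity
  have hrow1 : ∀ i, ∑ j, W i j = 1 := by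
    intro i
    have : ∑ j, W i j = (∑ j, μ (φ ⁻¹' (C j) ∩ C i)).toReal / m i := by
      rw [ENNReal.toReal_sum (fun a _ => hfin _), Finset.sum_div]
      exact Finset.sum_congr rfl fun j _ => hW i j
    rw [this, hrowsum i]
    exact div_self (hmpos i).ne'
  have hnumW : ∀ i j, m i * W i j = (μ (φ ⁻¹' (C j) ∩ C i)).toReal := by
    intro i j
    rw [hW, mul_div_cancel₀ _ (hmpos i).ne']
  have hcolnum : ∀ j, ∑ i, m i * W i j = m j := by
    intro j
    simp only [hnumW]
    rw [← ENNReal.toReal_sum (fun a _ => hfin _), hcolsum j]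
  constructor
  · -- uniform → doubly stochastic
    intro huni
    refine ⟨hnn, hrow1, fun j => ?_⟩
    have hc : ∀ i, m i = m j := fun i => by
      show (μ (C i)).toReal = (μ (C j)).toReal
      rw [huni i j]
    have : ∑ i, W i j = (∑ i, m i * W i j) / m j := by
      rw [Finset.sum_div]
      refine Finset.sum_congr rfl fun i _ => ?_
      rw [← hc i, mul_div_cancel_left₀ _ (hmpos i).ne']
    rw [this, hcolnum j, div_self (hmpos j).ne']
  · rintro ⟨-, hrow, hcol⟩ i j
    have hne : Nonempty I := ⟨i⟩
    obtain ⟨i0, -, hi0⟩ := Finset.exists_min_image Finset.univ m Finset.univ_nonempty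
    set S : Finset I := Finset.univ.filter (fun k => m k = m i0) with hS
    have hSmem : ∀ k, k ∈ S ↔ m k = m i0 := by
      intro k; simp [hS]
    -- Step A
    have stepA : ∀ j' ∈ S, ∀ i', i' ∉ S → W i' j' = 0 := by
      intro j' hj' i' hi'
      have hsum0 : ∑ k, (m k - m i0) * W k j' = 0 := by
        have h1 : ∑ k, m i0 * W k j' = m i0 := by
          rw [← Finset.mul_sum, hcol j', mul_one]
        have h2 : ∑ k, (m k - m i0) * W k j'
            = ∑ k, m k * W k j' - ∑ k, m i0 * W k j' := by
          rw [← Finset.sum_sub_distrib]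
          exact Finset.sum_congr rfl fun k _ => by ring
        rw [h2, hcolnum j', h1, (hSmem j').mp hj', sub_self]
      have hterm : ∀ k ∈ Finset.univ, (0:ℝ) ≤ (m k - m i0) * W k j' := by
        intro k _
        exact mul_nonneg (sub_nonneg.mpr (hi0 k (Finset.mem_univ k))) (hnn k j')
      have := (Finset.sum_eq_zero_iff_of_nonneg hterm).mp hsum0 i' (Finset.mem_univ i')
      rcases mul_eq_zero.mp this with h | h
      · exact absurd (by linarith [sub_eq_zero.mp h] : m i' = m i0) ((hSmem i').not.mp hi')
      · exact h
    -- column sums restricted to S are 1 for j' ∈ S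
    have hcolS : ∀ j' ∈ S, ∑ i' ∈ S, W i' j' = 1 := by
      intro j' hj'
      rw [Finset.sum_subset (Finset.subset_univ S)
        (fun x _ hx => stepA j' hj' x hx), hcol j']
    -- Step B
    have stepB : ∀ i' ∈ S, ∀ j', j' ∉ S → W i' j' = 0 := by
      have hsum0 : ∑ i' ∈ S, (1 - ∑ j' ∈ S, W i' j') = 0 := by
        rw [Finset.sum_sub_distrib, Finset.sum_const, Finset.sum_comm]
        have : ∑ j' ∈ S, ∑ i' ∈ S, W i' j' = S.card • (1:ℝ) := by
          rw [Finset.sum_congr rfl (fun j' hj' => hcolS j' hj'), Finset.sum_const]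
        rw [this, sub_self]
      have hterm : ∀ i' ∈ S, (0:ℝ) ≤ 1 - ∑ j' ∈ S, W i' j' := by
        intro i' _
        have : ∑ j' ∈ S, W i' j' ≤ ∑ j', W i' j' :=
          Finset.sum_le_sum_of_subset_of_nonneg (Finset.subset_univ S)
            (fun k _ _ => hnn i' k)
        rw [hrow i'] at this; linarith
      have hall := (Finset.sum_eq_zero_iff_of_nonneg hterm).mp hsum0
      intro i' hi' j' hj'
      have h1 : ∑ k ∈ S, W i' k = 1 := by linarith [hall i' hi']
      have h2 : ∑ k ∈ Finset.univ \ S, W i' k = 0 := by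
        have := Finset.sum_sdiff (f := fun k => W i' k) (Finset.subset_univ S)
        rw [h1, hrow i'] at this; linarith
      exact (Finset.sum_eq_zero_iff_of_nonneg (fun k _ => hnn i' k)).mp h2 j'
        (Finset.mem_sdiff.mpr ⟨Finset.mem_univ j', hj'⟩)
    -- the union U
    set U : Set X := ⋃ k ∈ S, C k with hU
    have hUmeas : MeasurableSet U := S.measurableSet_biUnion (fun k _ => hmeas k)
    have hi0S : i0 ∈ S := (hSmem i0).mpr rfl
    -- null intersections
    have hzero : ∀ i' ∈ S, ∀ j', j' ∉ S → μ (φ ⁻¹' (C j') ∩ C i') = 0 := by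
      intro i' hi' j' hj'
      have := hnumW i' j'
      rw [stepB i' hi' j' hj', mul_zero] at this
      exact (ENNReal.toReal_eq_zero_iff _).mp this.symm |>.resolve_right (hfin _)
    have hdiff1 : μ (U \ φ ⁻¹' U) = 0 := by
      set N : Set X := ⋃ p : I × I,
        (if p.1 ∈ S ∧ p.2 ∉ S then φ ⁻¹' (C p.2) ∩ C p.1 else ∅) with hN
      have hNnull : μ N = 0 := by
        refine measure_iUnion_null fun p => ?_
        split_ifs with h
        · exact hzero p.1 h.1 p.2 h.2
        · simp
      have hsub : U \ φ ⁻¹' U ⊆ N := by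
        rintro x ⟨hxU, hxn⟩
        obtain ⟨i', hi', hxi⟩ := mem_iUnion₂.mp hxU
        have hx2 : φ x ∈ ⋃ k, C k := by rw [hcover]; trivial
        obtain ⟨j', hxj⟩ := mem_iUnion.mp hx2
        have hj' : j' ∉ S := fun hj' =>
          hxn (mem_preimage.mpr (mem_iUnion₂.mpr ⟨j', hj', hxj⟩))
        refine mem_iUnion.mpr ⟨(i', j'), ?_⟩
        rw [if_pos ⟨hi', hj'⟩]
        exact ⟨hxj, hxi⟩
      exact measure_mono_null hsub hNnull
    have hpre : μ (φ ⁻¹' U) = μ U := hφ.measure_preimage hUmeas.nullMeasurableSet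
    have hdiff2 : μ (φ ⁻¹' U \ U) = 0 := by
      have e1 : μ (φ ⁻¹' U ∩ U) + μ (φ ⁻¹' U \ U) = μ (φ ⁻¹' U) :=
        measure_inter_add_diff _ hUmeas
      have e2 : μ (U ∩ φ ⁻¹' U) + μ (U \ φ ⁻¹' U) = μ U :=
        measure_inter_add_diff _ (hφ.measurable hUmeas)
      rw [hdiff1, add_zero] at e2
      rw [hpre, ← e2, inter_comm] at e1
      exact (ENNReal.add_right_inj (hfin _)).mp (by rw [e1, add_zero])
    have hiter : ∀ n, μ (U \ (φ^[n]) ⁻¹' U) = 0 := by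
      intro n
      induction n with
      | zero => simp
      | succ n ih =>
        rw [Function.iterate_succ']
        have hsub : U \ (φ ∘ φ^[n]) ⁻¹' U ⊆
            (U \ (φ^[n]) ⁻¹' U) ∪ (φ^[n]) ⁻¹' (U \ φ ⁻¹' U) := by
          rintro x ⟨hxU, hxn⟩
          by_cases h : x ∈ (φ^[n]) ⁻¹' U
          · right
            exact ⟨h, fun hc => hxn hc⟩
          · exact Or.inl ⟨hxU, h⟩
        refine measure_mono_null hsub ?_
        refine measure_union_null ih ?_
        rw [(hφ.iterate n).measure_preimage
          (hUmeas.diff (hφ.measurable hUmeas)).nullMeasurableSet]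
        exact hdiff1
    have hIntEq : ∀ n, μ ((φ^[n]) ⁻¹' U ∩ U) = μ U := by
      intro n
      have e2 : μ (U ∩ (φ^[n]) ⁻¹' U) + μ (U \ (φ^[n]) ⁻¹' U) = μ U :=
        measure_inter_add_diff _ ((hφ.iterate n).measurable hUmeas)
      rw [hiter n, add_zero, inter_comm] at e2
      exact e2
    have hlim := hmix U U hUmeas hUmeas
    have hconst : Tendsto (fun n => (μ ((φ^[n]) ⁻¹' U ∩ U)).toReal) atTop
        (𝓝 ((μ U).toReal)) := by
      simp only [hIntEq]
      exact tendsto_const_nhds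
    have heq : (μ U).toReal = (μ U).toReal / (μ Set.univ).toReal * (μ U).toReal :=
      tendsto_nhds_unique hconst hlim
    have hupos : 0 < (μ U).toReal := by
      refine ENNReal.toReal_pos ?_ (hfin _)
      refine fun h => (hpos i0).ne' (measure_mono_null ?_ h)
      exact subset_biUnion_of_mem (u := fun k => C k) hi0S
    have hux : (μ U).toReal ≤ (μ Set.univ).toReal :=
      ENNReal.toReal_mono (hfin _) (measure_mono (subset_univ U))
    have hxu : (μ Set.univ).toReal = (μ U).toReal := by
      have hx0 : (0:ℝ) < (μ Set.univ).toReal := lt_of_lt_of_le hupos hux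
      have h2 : (μ U).toReal * (μ Set.univ).toReal
          = (μ U).toReal * (μ U).toReal := by
        calc (μ U).toReal * (μ Set.univ).toReal
            = ((μ U).toReal / (μ Set.univ).toReal * (μ U).toReal) * (μ Set.univ).toReal := by
              rw [← heq]
          _ = (μ U).toReal * (μ U).toReal := by field_simp
      exact (mul_left_cancel₀ hupos.ne' h2)
    -- complement is null
    have hcompl : μ Uᶜ = 0 := by
      have := measure_add_measure_compl (μ := μ) hUmeas
      have h2 : (μ U).toReal + (μ Uᶜ).toReal = (μ Set.univ).toReal := by
        rw [← ENNReal.toReal_add (hfin _) (hfin _), this]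
      rw [hxu] at h2
      have : (μ Uᶜ).toReal = 0 := by linarith
      exact (ENNReal.toReal_eq_zero_iff _).mp this |>.resolve_right (hfin _)
    have hallS : ∀ k, k ∈ S := by
      intro k
      by_contra hk
      refine (hpos k).ne' (measure_mono_null ?_ hcompl)
      intro x hxk hxU
      simp only [hU, mem_iUnion, exists_prop] at hxU
      obtain ⟨i', hi', hxi⟩ := hxU
      have : i' ≠ k := fun h => hk (h ▸ hi')
      exact (hdisj this).le_bot ⟨hxi, hxk⟩
    have h1 : m i = m i0 := (hSmem i).mp (hallS i)
    have h2 : m j = m i0 := (hSmem j).mp (hallS j)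
    exact (ENNReal.toReal_eq_toReal_iff' (hfin _) (hfin _)).mp (h1.trans h2.symm)
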